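/- Let P and Q be matroids on the same ground set V, and let D = P ∩ Q (the sets independent in both). Then the fractional edge covering number β*(D) equals max(ζ(P), ζ(Q)). -/

import Mathlib

open Finset

variable {V : Type*} [Fintype V] [DecidableEq V]

/-- A matroid, given by its collection of independent sets (as a predicate on finsets). -/
def IsMatroid (Indep : Finset V → Prop) : Prop :=
  Indep ∅ ∧ (∀ ⦃I J : Finset V⦄, Indep J → I ⊆ J → Indep I) ∧
    ∀ ⦃I J : Finset V⦄, Indep I → Indep J → I.card < J.card →
      ∃ x ∈ J, x ∉ I ∧ Indep (insert x I)

/-- Looplessness: every singleton is independent. -/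
def Loopless (Indep : Finset V → Prop) : Prop := ∀ v : V, Indep {v}

open scoped Classical in
/-- The rank of a set `S`: maximal size of an independent subset of `S`. -/
noncomputable def rnk (Indep : Finset V → Prop) (S : Finset V) : ℕ :=
  (S.powerset.filter (fun e => Indep e)).sup Finset.card

/-- `ζ(M) = max over nonempty S of |S| / rank(S)`. -/
noncomputable def zeta (Indep : Finset V → Prop) : ℝ :=
  sSup {x : ℝ | ∃ S : Finset V, S.Nonempty ∧ x = (S.card : ℝ) / (rnk Indep S : ℝ)}

/-- The edge covering number: minimal number of edges of the complex covering `V`. -/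
noncomputable def beta (Indep : Finset V → Prop) : ℕ :=
  sInf {k : ℕ | ∃ F : Finset (Finset V), (∀ e ∈ F, Indep e) ∧
    (∀ v : V, ∃ e ∈ F, v ∈ e) ∧ F.card = k}

/-- The fractional edge covering number. -/
noncomputable def betaStar (D : Finset V → Prop) : ℝ :=
  sInf {x : ℝ | ∃ f : Finset V → ℝ, (∀ e, 0 ≤ f e) ∧ (∀ e, f e ≠ 0 → D e) ∧
    (∀ v : V, 1 ≤ ∑ e : Finset V, if v ∈ e then f e else 0) ∧ x = ∑ e : Finset V, f e}

open scoped Classical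

set_option linter.unusedSectionVars false
set_option linter.unusedVariables false

section RankBasics

variable {Indep : Finset V → Prop}

lemma le_rnk_of {e S : Finset V} (h : Indep e) (hes : e ⊆ S) : e.card ≤ rnk Indep S := by
  apply Finset.le_sup
  simp [Finset.mem_filter, Finset.mem_powerset, hes, h]

lemma rnk_le_card {S : Finset V} : rnk Indep S ≤ S.card := by
  apply Finset.sup_le
  intro e he
  rw [Finset.mem_filter, Finset.mem_powerset] at he
  exact Finset.card_le_card he.1

lemma rnk_empty : rnk Indep (∅ : Finset V) = 0 :=
  Nat.le_antisymm (by simpa using (rnk_le_card (Indep := Indep) (S := ∅))) (Nat.zero_le _)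

lemma exists_rnk (hM : IsMatroid Indep) (S : Finset V) :
    ∃ e, e ⊆ S ∧ Indep e ∧ e.card = rnk Indep S := by
  have hne : (S.powerset.filter (fun e => Indep e)).Nonempty :=
    ⟨∅, by simp [Finset.mem_filter, Finset.mem_powerset, hM.1]⟩
  obtain ⟨e, he, hcard⟩ := Finset.exists_mem_eq_sup _ hne Finset.card
  rw [Finset.mem_filter, Finset.mem_powerset] at he
  exact ⟨e, he.1, he.2, hcard.symm⟩

lemma rnk_mono {S T : Finset V} (h : S ⊆ T) : rnk Indep S ≤ rnk Indep T := by
  apply Finset.sup_le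
  intro e he
  rw [Finset.mem_filter, Finset.mem_powerset] at he
  exact le_rnk_of he.2 (he.1.trans h)

lemma rnk_singleton (h : Indep {v}) : rnk Indep {v} = 1 := by
  refine Nat.le_antisymm (by simpa using (rnk_le_card (Indep := Indep) (S := {v}))) ?_
  simpa using le_rnk_of h (Finset.Subset.refl {v})

lemma indep_of_rnk_eq_card (hM : IsMatroid Indep) {e : Finset V}
    (h : rnk Indep e = e.card) : Indep e := by
  obtain ⟨I, hIe, hI, hIcard⟩ := exists_rnk hM e
  have : I = e := Finset.eq_of_subset_of_card_le hIe (by omega)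
  rwa [this] at hI

lemma exists_extend_aux (hM : IsMatroid Indep) (S : Finset V) :
    ∀ n : ℕ, ∀ I : Finset V, Indep I → I ⊆ S → rnk Indep S - I.card = n →
    ∃ J, I ⊆ J ∧ J ⊆ S ∧ Indep J ∧ J.card = rnk Indep S := by
  intro n
  induction n with
  | zero =>
    intro I hI hIS hn
    have := le_rnk_of hI hIS
    exact ⟨I, Finset.Subset.refl I, hIS, hI, by omega⟩
  | succ n ih =>
    intro I hI hIS hn
    obtain ⟨Y, hYS, hY, hYcard⟩ := exists_rnk hM S
    have hlt : I.card < Y.card := by omega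
    obtain ⟨x, hxY, hxI, hins⟩ := hM.2.2 hI hY hlt
    have hcard : (insert x I).card = I.card + 1 := Finset.card_insert_of_notMem hxI
    have hsub : insert x I ⊆ S := Finset.insert_subset (hYS hxY) hIS
    obtain ⟨J, hJ1, hJ2, hJ3, hJ4⟩ := ih (insert x I) hins hsub (by omega)
    exact ⟨J, (Finset.subset_insert x I).trans hJ1, hJ2, hJ3, hJ4⟩

lemma exists_extend (hM : IsMatroid Indep) {I S : Finset V} (hI : Indep I) (hIS : I ⊆ S) :
    ∃ J, I ⊆ J ∧ J ⊆ S ∧ Indep J ∧ J.card = rnk Indep S :=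
  exists_extend_aux hM S _ I hI hIS rfl

lemma rnk_submod (hM : IsMatroid Indep) (A B : Finset V) :
    rnk Indep (A ∪ B) + rnk Indep (A ∩ B) ≤ rnk Indep A + rnk Indep B := by
  obtain ⟨I, hIsub, hI, hIcard⟩ := exists_rnk hM (A ∩ B)
  have hIU : I ⊆ A ∪ B := hIsub.trans (Finset.inter_subset_union)
  obtain ⟨J, hIJ, hJsub, hJ, hJcard⟩ := exists_extend hM hI hIU
  have h1 : (J ∩ A).card ≤ rnk Indep A :=
    le_rnk_of (hM.2.1 hJ Finset.inter_subset_left) Finset.inter_subset_right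
  have h2 : (J ∩ B).card ≤ rnk Indep B :=
    le_rnk_of (hM.2.1 hJ Finset.inter_subset_left) Finset.inter_subset_right
  have h3 : (J ∩ (A ∩ B)).card ≤ rnk Indep (A ∩ B) :=
    le_rnk_of (hM.2.1 hJ Finset.inter_subset_left) Finset.inter_subset_right
  have hu : (J ∩ A) ∪ (J ∩ B) = J := by
    rw [← Finset.inter_union_distrib_left]
    exact Finset.inter_eq_left.mpr hJsub
  have hi : (J ∩ A) ∩ (J ∩ B) = J ∩ (A ∩ B) := by
    ext y; simp [Finset.mem_inter]; tauto
  have hcui := Finset.card_union_add_card_inter (J ∩ A) (J ∩ B)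
  rw [hu, hi] at hcui
  have hIJcard : I.card ≤ (J ∩ (A ∩ B)).card :=
    Finset.card_le_card (Finset.subset_inter hIJ hIsub)
  omega

end RankBasics
section Zeta

variable {Indep : Finset V → Prop}

lemma rnk_pos_of_loopless (hl : Loopless Indep) {S : Finset V} (hS : S.Nonempty) :
    1 ≤ rnk Indep S := by
  obtain ⟨v, hv⟩ := hS
  have := le_rnk_of (hl v) (Finset.singleton_subset_iff.mpr hv)
  simpa using this

lemma zset_bddAbove (hl : Loopless Indep) :
    BddAbove {x : ℝ | ∃ S : Finset V, S.Nonempty ∧ x = (S.card : ℝ) / (rnk Indep S : ℝ)} := by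
  refine ⟨(Fintype.card V : ℝ), ?_⟩
  rintro x ⟨S, hS, rfl⟩
  have h1 : (1 : ℝ) ≤ (rnk Indep S : ℝ) := by exact_mod_cast rnk_pos_of_loopless hl hS
  have h2 : (S.card : ℝ) ≤ (Fintype.card V : ℝ) := by
    exact_mod_cast (Finset.card_le_card (Finset.subset_univ S)).trans
      (le_of_eq Finset.card_univ)
  rw [div_le_iff₀ (by linarith)]
  have h3 : (0:ℝ) ≤ (Fintype.card V : ℝ) := by positivity
  nlinarith

lemma ratio_le_zeta (hl : Loopless Indep) {S : Finset V} (hS : S.Nonempty) :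
    (S.card : ℝ) / (rnk Indep S : ℝ) ≤ zeta Indep :=
  le_csSup (zset_bddAbove hl) ⟨S, hS, rfl⟩

lemma one_le_zeta [Nonempty V] (hl : Loopless Indep) : 1 ≤ zeta Indep := by
  obtain ⟨v⟩ := (inferInstance : Nonempty V)
  have := ratio_le_zeta hl (Finset.singleton_nonempty v)
  rwa [rnk_singleton (hl v), Finset.card_singleton, Nat.cast_one, div_one] at this

lemma card_le_zeta_mul (hl : Loopless Indep) (S : Finset V) :
    (S.card : ℝ) ≤ zeta Indep * (rnk Indep S : ℝ) := by
  rcases S.eq_empty_or_nonempty with rfl | hS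
  · simp [rnk_empty]
  · have hpos : (0 : ℝ) < (rnk Indep S : ℝ) := by
      exact_mod_cast rnk_pos_of_loopless hl hS
    have := ratio_le_zeta hl hS
    rw [div_le_iff₀ hpos] at this
    linarith

end Zeta

section LowerBound

variable {P Q : Finset V → Prop}

lemma zeta_le_cover [Nonempty V] (hM : IsMatroid P) (hl : Loopless P)
    {f : Finset V → ℝ} (hf0 : ∀ e, 0 ≤ f e) (hfD : ∀ e, f e ≠ 0 → P e)
    (hcov : ∀ v : V, 1 ≤ ∑ e : Finset V, if v ∈ e then f e else 0) :
    zeta P ≤ ∑ e : Finset V, f e := by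
  apply csSup_le
  · obtain ⟨v⟩ := (inferInstance : Nonempty V)
    exact ⟨_, {v}, Finset.singleton_nonempty v, rfl⟩
  rintro x ⟨S, hS, rfl⟩
  have hpos : (0 : ℝ) < (rnk P S : ℝ) := by
    exact_mod_cast rnk_pos_of_loopless hl hS
  rw [div_le_iff₀ hpos]
  have key : (S.card : ℝ) ≤ (rnk P S : ℝ) * ∑ e : Finset V, f e := by
    calc (S.card : ℝ) = ∑ _v ∈ S, (1:ℝ) := by simp
      _ ≤ ∑ v ∈ S, ∑ e : Finset V, (if v ∈ e then f e else 0) :=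
          Finset.sum_le_sum (fun v _ => hcov v)
      _ = ∑ e : Finset V, ∑ v ∈ S, (if v ∈ e then f e else 0) := Finset.sum_comm
      _ = ∑ e : Finset V, ((S ∩ e).card : ℝ) * f e := by
          refine Finset.sum_congr rfl (fun e _ => ?_)
          rw [← Finset.sum_filter, Finset.sum_const, Finset.filter_mem_eq_inter,
            nsmul_eq_mul]
      _ ≤ ∑ e : Finset V, (rnk P S : ℝ) * f e := by
          refine Finset.sum_le_sum (fun e _ => ?_)
          rcases eq_or_ne (f e) 0 with h | h
          · simp [h]
          · have hPe : P e := hfD e h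
            have hind : P (S ∩ e) := hM.2.1 hPe Finset.inter_subset_right
            have hle : ((S ∩ e).card : ℝ) ≤ (rnk P S : ℝ) := by
              exact_mod_cast le_rnk_of hind Finset.inter_subset_left
            exact mul_le_mul_of_nonneg_right hle (hf0 e)
      _ = (rnk P S : ℝ) * ∑ e : Finset V, f e := by rw [Finset.mul_sum]
  linarith

lemma coverSet_nonempty (hPl : Loopless P) (hQl : Loopless Q) :
    {x : ℝ | ∃ f : Finset V → ℝ, (∀ e, 0 ≤ f e) ∧
      (∀ e, f e ≠ 0 → P e ∧ Q e) ∧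
      (∀ v : V, 1 ≤ ∑ e : Finset V, if v ∈ e then f e else 0) ∧
      x = ∑ e : Finset V, f e}.Nonempty := by
  classical
  refine ⟨_, fun e => if e.card = 1 then (1:ℝ) else 0, ?_, ?_, ?_, rfl⟩
  · intro e; dsimp only; split <;> norm_num
  · intro e he
    have hc : e.card = 1 := by
      by_contra h; simp [h] at he
    obtain ⟨v, rfl⟩ := Finset.card_eq_one.mp hc
    exact ⟨hPl v, hQl v⟩
  · intro v
    have hterm : (if v ∈ ({v} : Finset V) then (if ({v} : Finset V).card = 1 then (1:ℝ) else 0) else 0) = 1 := by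
      simp
    calc (1:ℝ) = _ := hterm.symm
      _ ≤ ∑ e : Finset V, (if v ∈ e then (if e.card = 1 then (1:ℝ) else 0) else 0) := by
          apply Finset.single_le_sum (f := fun e : Finset V =>
            (if v ∈ e then (if e.card = 1 then (1:ℝ) else 0) else 0))
          · intro e _
            rcases eq_or_ne (e.card) 1 with h | h <;> by_cases hv : v ∈ e <;>
              simp [h, hv]
          · exact Finset.mem_univ _

lemma coverSet_bddBelow :
    BddBelow {x : ℝ | ∃ f : Finset V → ℝ, (∀ e, 0 ≤ f e) ∧
      (∀ e, f e ≠ 0 → P e ∧ Q e) ∧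
      (∀ v : V, 1 ≤ ∑ e : Finset V, if v ∈ e then f e else 0) ∧
      x = ∑ e : Finset V, f e} := by
  refine ⟨0, ?_⟩
  rintro x ⟨f, hf0, -, -, rfl⟩
  exact Finset.sum_nonneg (fun e _ => hf0 e)

lemma lower_bound [Nonempty V] (hP : IsMatroid P) (hQ : IsMatroid Q)
    (hPl : Loopless P) (hQl : Loopless Q) :
    max (zeta P) (zeta Q) ≤ betaStar (fun e => P e ∧ Q e) := by
  apply le_csInf (coverSet_nonempty hPl hQl)
  rintro b ⟨f, hf0, hfD, hcov, rfl⟩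
  exact max_le
    (zeta_le_cover hP hPl hf0 (fun e he => (hfD e he).1) hcov)
    (zeta_le_cover hQ hQl hf0 (fun e he => (hfD e he).2) hcov)

end LowerBound
section TightBlocks

/-- Sum of `x` over a finset. -/
noncomputable def xs (x : V → ℝ) (S : Finset V) : ℝ := ∑ v ∈ S, x v

variable {Indep : Finset V → Prop}

/-- A set is tight for `x` if the sum of `x` on it equals its rank. -/
def IsTight (Indep : Finset V → Prop) (x : V → ℝ) (S : Finset V) : Prop :=
  xs x S = (rnk Indep S : ℝ)

/-- `v` lies in some tight set. -/
def InT (Indep : Finset V → Prop) (x : V → ℝ) (v : V) : Prop :=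
  ∃ S, IsTight Indep x S ∧ v ∈ S

/-- The minimal tight set containing `v`. -/
noncomputable def Sv (Indep : Finset V → Prop) (x : V → ℝ) (v : V) : Finset V :=
  ((Finset.univ.powerset.filter (fun S => IsTight Indep x S ∧ v ∈ S)).inf id)

noncomputable def Nv (Indep : Finset V → Prop) (x : V → ℝ) (v : V) : Finset V :=
  (Sv Indep x v).sup (fun w => if Sv Indep x w = Sv Indep x v then ∅ else Sv Indep x w)

/-- The block of `v`: minimal tight set minus all smaller minimal tight sets. -/
noncomputable def blockF (Indep : Finset V → Prop) (x : V → ℝ) (v : V) : Finset V :=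
  Sv Indep x v \ Nv Indep x v

variable {x : V → ℝ}

lemma tight_empty : IsTight Indep x ∅ := by
  simp [IsTight, xs, rnk_empty]

lemma tight_union (hM : IsMatroid Indep) (hfeas : ∀ S, xs x S ≤ (rnk Indep S : ℝ))
    {A B : Finset V} (hA : IsTight Indep x A) (hB : IsTight Indep x B) :
    IsTight Indep x (A ∪ B) ∧ IsTight Indep x (A ∩ B) := by
  have hsub : (rnk Indep (A ∪ B) : ℝ) + (rnk Indep (A ∩ B) : ℝ)
      ≤ (rnk Indep A : ℝ) + (rnk Indep B : ℝ) := by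
    exact_mod_cast rnk_submod hM A B
  have hmod : xs x (A ∪ B) + xs x (A ∩ B) = xs x A + xs x B := by
    simpa [xs] using Finset.sum_union_inter (s₁ := A) (s₂ := B) (f := x)
  have h1 := hfeas (A ∪ B)
  have h2 := hfeas (A ∩ B)
  unfold IsTight at *
  constructor <;> linarith

lemma Sv_spec (hM : IsMatroid Indep) (hfeas : ∀ S, xs x S ≤ (rnk Indep S : ℝ))
    {v : V} (hv : InT Indep x v) : IsTight Indep x (Sv Indep x v) ∧ v ∈ Sv Indep x v := by
  classical
  obtain ⟨S, hS, hvS⟩ := hv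
  have hmem : S ∈ Finset.univ.powerset.filter (fun S => IsTight Indep x S ∧ v ∈ S) := by
    simp [Finset.mem_filter, Finset.mem_powerset, hS, hvS]
  -- prove the property for the inf of any nonempty subfamily
  suffices h : ∀ (T : Finset (Finset V)), T.Nonempty →
      (∀ A ∈ T, IsTight Indep x A ∧ v ∈ A) →
      IsTight Indep x (T.inf id) ∧ v ∈ T.inf id by
    apply h
    · exact ⟨S, hmem⟩
    · intro A hA
      rw [Finset.mem_filter] at hA
      exact hA.2
  intro T hT hall
  induction hT using Finset.Nonempty.cons_induction with
  | singleton A =>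
    have := hall A (by simp)
    simpa using this
  | cons A T hAT hTne ih =>
    have hA := hall A (by simp)
    have hT' := ih (fun B hB => hall B (Finset.mem_cons_of_mem hB))
    rw [Finset.inf_cons]
    have hint := (tight_union hM hfeas hA.1 hT'.1).2
    constructor
    · simpa [id] using hint
    · simp only [Finset.inf_eq_inter, ge_iff_le, Finset.le_eq_subset, id]
      exact Finset.mem_inter.mpr ⟨hA.2, hT'.2⟩

lemma Sv_subset {T : Finset V} (hT : IsTight Indep x T) {v : V} (hv : v ∈ T) :
    Sv Indep x v ⊆ T := by
  have : T ∈ Finset.univ.powerset.filter (fun S => IsTight Indep x S ∧ v ∈ S) := by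
    simp [Finset.mem_filter, Finset.mem_powerset, hT, hv]
  exact Finset.inf_le this (f := id)

lemma InT_of_mem_Sv (hM : IsMatroid Indep) (hfeas : ∀ S, xs x S ≤ (rnk Indep S : ℝ))
    {v w : V} (hv : InT Indep x v) (hw : w ∈ Sv Indep x v) : InT Indep x w :=
  ⟨Sv Indep x v, (Sv_spec hM hfeas hv).1, hw⟩

lemma Sv_sub_Sv (hM : IsMatroid Indep) (hfeas : ∀ S, xs x S ≤ (rnk Indep S : ℝ))
    {v w : V} (hv : InT Indep x v) (hw : w ∈ Sv Indep x v) :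
    Sv Indep x w ⊆ Sv Indep x v :=
  Sv_subset (Sv_spec hM hfeas hv).1 hw

lemma Nv_tight (hM : IsMatroid Indep) (hfeas : ∀ S, xs x S ≤ (rnk Indep S : ℝ))
    {v : V} (hv : InT Indep x v) : IsTight Indep x (Nv Indep x v) := by
  classical
  apply Finset.sup_induction
  · exact tight_empty
  · intro a ha b hb
    simpa [Finset.sup_eq_union] using (tight_union hM hfeas ha hb).1
  · intro w hw
    split
    · exact tight_empty
    · exact (Sv_spec hM hfeas (InT_of_mem_Sv hM hfeas hv hw)).1

lemma Nv_subset (hM : IsMatroid Indep) (hfeas : ∀ S, xs x S ≤ (rnk Indep S : ℝ))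
    {v : V} (hv : InT Indep x v) : Nv Indep x v ⊆ Sv Indep x v := by
  show Nv Indep x v ≤ Sv Indep x v
  apply Finset.sup_le
  intro w hw
  split
  · simp
  · exact Sv_sub_Sv hM hfeas hv hw (x := x)

lemma mem_block_self (hM : IsMatroid Indep) (hfeas : ∀ S, xs x S ≤ (rnk Indep S : ℝ))
    {v : V} (hv : InT Indep x v) : v ∈ blockF Indep x v := by
  classical
  rw [blockF, Finset.mem_sdiff]
  refine ⟨(Sv_spec hM hfeas hv).2, ?_⟩
  intro hmem
  rw [Nv, Finset.mem_sup] at hmem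
  obtain ⟨w, hw, hvw⟩ := hmem
  by_cases h : Sv Indep x w = Sv Indep x v
  · simp [h] at hvw
  · rw [if_neg h] at hvw
    have h1 : Sv Indep x w ⊆ Sv Indep x v := Sv_sub_Sv hM hfeas hv hw
    have h2 : Sv Indep x v ⊆ Sv Indep x w :=
      Sv_subset (Sv_spec hM hfeas (InT_of_mem_Sv hM hfeas hv hw)).1 hvw
    exact h (Finset.Subset.antisymm h1 h2)

lemma Sv_eq_of_mem_block (hM : IsMatroid Indep) (hfeas : ∀ S, xs x S ≤ (rnk Indep S : ℝ))
    {v w : V} (hv : InT Indep x v) (hw : w ∈ blockF Indep x v) :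
    Sv Indep x w = Sv Indep x v := by
  classical
  rw [blockF, Finset.mem_sdiff] at hw
  by_contra h
  apply hw.2
  rw [Nv, Finset.mem_sup]
  exact ⟨w, hw.1, by rw [if_neg h]; exact (Sv_spec hM hfeas (InT_of_mem_Sv hM hfeas hv hw.1)).2⟩

lemma block_eq_of_mem (hM : IsMatroid Indep) (hfeas : ∀ S, xs x S ≤ (rnk Indep S : ℝ))
    {v w : V} (hv : InT Indep x v) (hw : w ∈ blockF Indep x v) :
    blockF Indep x w = blockF Indep x v := by
  have hS : Sv Indep x w = Sv Indep x v := Sv_eq_of_mem_block hM hfeas hv hw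
  have hN : Nv Indep x w = Nv Indep x v := by
    rw [Nv, Nv, hS]
  rw [blockF, blockF, hS, hN]

lemma block_overlap (hM : IsMatroid Indep) (hfeas : ∀ S, xs x S ≤ (rnk Indep S : ℝ))
    {v w u : V} (hv : InT Indep x v) (hw : InT Indep x w)
    (hu1 : u ∈ blockF Indep x v) (hu2 : u ∈ blockF Indep x w) :
    blockF Indep x v = blockF Indep x w := by
  rw [← block_eq_of_mem hM hfeas hv hu1, ← block_eq_of_mem hM hfeas hw hu2]

lemma block_subset_Sv {v : V} : blockF Indep x v ⊆ Sv Indep x v := Finset.sdiff_subset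

lemma block_subset_tight (hM : IsMatroid Indep) (hfeas : ∀ S, xs x S ≤ (rnk Indep S : ℝ))
    {T : Finset V} (hT : IsTight Indep x T) {v : V} (hv : v ∈ T) :
    blockF Indep x v ⊆ T :=
  block_subset_Sv.trans (Sv_subset hT hv)

lemma tight_biUnion_blocks (hM : IsMatroid Indep) (hfeas : ∀ S, xs x S ≤ (rnk Indep S : ℝ))
    {T : Finset V} (hT : IsTight Indep x T) :
    (T.image (blockF Indep x)).biUnion id = T := by
  classical
  ext u
  simp only [Finset.mem_biUnion, Finset.mem_image, id]
  constructor
  · rintro ⟨B, ⟨w, hw, rfl⟩, hu⟩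
    exact block_subset_tight hM hfeas hT hw hu
  · intro hu
    exact ⟨blockF Indep x u, ⟨u, hu, rfl⟩, mem_block_self hM hfeas ⟨T, hT, hu⟩⟩

lemma sum_tight_blocks (hM : IsMatroid Indep) (hfeas : ∀ S, xs x S ≤ (rnk Indep S : ℝ))
    {T : Finset V} (hT : IsTight Indep x T) (d : V → ℝ) :
    ∑ v ∈ T, d v = ∑ B ∈ T.image (blockF Indep x), ∑ v ∈ B, d v := by
  classical
  have hdisj : Set.PairwiseDisjoint (↑(T.image (blockF Indep x))) (id : Finset V → Finset V) := by
    intro B hB C hC hBC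
    simp only [Finset.coe_image, Set.mem_image, Finset.mem_coe] at hB hC
    obtain ⟨v, hv, rfl⟩ := hB
    obtain ⟨w, hw, rfl⟩ := hC
    have hvT : InT Indep x v := ⟨T, hT, hv⟩
    have hwT : InT Indep x w := ⟨T, hT, hw⟩
    simp only [Function.onFun, id]
    rw [Finset.disjoint_left]
    intro u hu1 hu2
    exact hBC (by rw [block_overlap hM hfeas hvT hwT hu1 hu2])
  conv_lhs => rw [← tight_biUnion_blocks hM hfeas hT]
  rw [Finset.sum_biUnion hdisj]
  rfl

lemma xs_block_int (hM : IsMatroid Indep) (hfeas : ∀ S, xs x S ≤ (rnk Indep S : ℝ))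
    {v : V} (hv : InT Indep x v) :
    ∃ z : ℤ, xs x (blockF Indep x v) = (z : ℝ) := by
  refine ⟨(rnk Indep (Sv Indep x v) : ℤ) - (rnk Indep (Nv Indep x v) : ℤ), ?_⟩
  have hsub : Nv Indep x v ⊆ Sv Indep x v := Nv_subset hM hfeas hv
  have h1 : xs x (blockF Indep x v) = xs x (Sv Indep x v) - xs x (Nv Indep x v) := by
    rw [blockF, xs, xs, xs]
    exact Finset.sum_sdiff_eq_sub hsub
  rw [h1, (Sv_spec hM hfeas hv).1, Nv_tight hM hfeas hv]
  push_cast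
  ring

end TightBlocks
section Direction

variable {Indep : Finset V → Prop} {x : V → ℝ}

/-- The set of fractional coordinates. -/
noncomputable def fracs (x : V → ℝ) : Finset V :=
  Finset.univ.filter (fun v => x v ≠ 0 ∧ x v ≠ 1)

lemma int_sum01 {s : Finset V} (h : ∀ u ∈ s, x u = 0 ∨ x u = 1) :
    ∃ m : ℤ, ∑ u ∈ s, x u = (m : ℝ) := by
  classical
  induction s using Finset.cons_induction with
  | empty => exact ⟨0, by simp⟩
  | cons a s ha ih =>
    obtain ⟨m, hm⟩ := ih (fun u hu => h u (Finset.mem_cons_of_mem hu))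
    rcases h a (Finset.mem_cons_self a s) with h0 | h1
    · exact ⟨m, by rw [Finset.sum_cons, h0, hm]; ring⟩
    · exact ⟨m + 1, by rw [Finset.sum_cons, h1, hm]; push_cast; ring⟩

lemma not_int01 {c : ℝ} (h0 : 0 < c) (h1 : c < 1) (z : ℤ) : (z : ℝ) ≠ c := by
  intro h
  rcases le_or_gt z 0 with hz | hz
  · have : (z : ℝ) ≤ 0 := by exact_mod_cast hz
    linarith
  · have : (1 : ℝ) ≤ (z : ℝ) := by exact_mod_cast hz
    linarith

lemma notmem_fracs {u : V} (hu : u ∉ fracs x) : x u = 0 ∨ x u = 1 := by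
  rw [fracs, Finset.mem_filter] at hu
  push_neg at hu
  by_cases h : x u = 0
  · exact Or.inl h
  · exact Or.inr (hu (Finset.mem_univ u) h)

lemma mem_fracs {u : V} (hu : u ∈ fracs x) (hx0 : ∀ v, 0 ≤ x v) (hx1 : ∀ v, x v ≤ 1) :
    0 < x u ∧ x u < 1 := by
  rw [fracs, Finset.mem_filter] at hu
  exact ⟨lt_of_le_of_ne (hx0 u) (Ne.symm hu.2.1), lt_of_le_of_ne (hx1 u) hu.2.2⟩

lemma block_two_fracs (hM : IsMatroid Indep) (hx0 : ∀ v, 0 ≤ x v) (hx1 : ∀ v, x v ≤ 1)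
    (hf : ∀ S, xs x S ≤ (rnk Indep S : ℝ)) {v : V} (hv : v ∈ fracs x)
    (hvT : InT Indep x v) : 2 ≤ ((blockF Indep x v) ∩ fracs x).card := by
  classical
  set B := blockF Indep x v with hB
  have hvB : v ∈ B ∩ fracs x :=
    Finset.mem_inter.mpr ⟨mem_block_self hM hf hvT, hv⟩
  by_contra hlt
  push_neg at hlt
  have hcard1 : (B ∩ fracs x).card = 1 := by
    have : 1 ≤ (B ∩ fracs x).card := Finset.card_pos.mpr ⟨v, hvB⟩
    omega
  obtain ⟨u, hu⟩ := Finset.card_eq_one.mp hcard1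
  have huv : u = v := by
    have := hvB; rw [hu, Finset.mem_singleton] at this; exact this.symm
  subst huv
  obtain ⟨z, hz⟩ := xs_block_int hM hf hvT
  obtain ⟨m, hm⟩ := int_sum01 (s := B \ fracs x)
    (fun w hw => notmem_fracs (Finset.mem_sdiff.mp hw).2)
  have hsplit : ∑ w ∈ B ∩ fracs x, x w + ∑ w ∈ B \ fracs x, x w = ∑ w ∈ B, x w :=
    Finset.sum_inter_add_sum_sdiff B (fracs x) x
  rw [hu, Finset.sum_singleton, hm] at hsplit
  have hxsB : ∑ w ∈ B, x w = (z : ℝ) := hz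
  have hxu : x u = ((z - m : ℤ) : ℝ) := by push_cast; linarith [hsplit, hxsB]
  obtain ⟨h0, h1⟩ := mem_fracs hv hx0 hx1
  exact not_int01 h0 h1 (z - m) hxu.symm

lemma block_mem_image (hM : IsMatroid Indep) (hf : ∀ S, xs x S ≤ (rnk Indep S : ℝ))
    {w : V} (hw : InT Indep x w) {u : V} (hu : u ∈ blockF Indep x w) {s : Finset V}
    (hws : w ∈ s) (hus : u ∈ s → u ∈ s) : blockF Indep x u = blockF Indep x w :=
  block_eq_of_mem hM hf hw hu

/-- Each block in the image decomposition is determined by any of its elements. -/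
lemma unique_block (hM : IsMatroid Indep) (hf : ∀ S, xs x S ≤ (rnk Indep S : ℝ))
    {v : V} (hvT : InT Indep x v) {B : Finset V}
    (hB : ∃ w, InT Indep x w ∧ B = blockF Indep x w) (hvB : v ∈ B) :
    B = blockF Indep x v := by
  obtain ⟨w, hw, rfl⟩ := hB
  exact (block_eq_of_mem hM hf hw hvB).symm

lemma blocks_count (hM : IsMatroid Indep) (hx0 : ∀ v, 0 ≤ x v) (hx1 : ∀ v, x v ≤ 1)
    (hf : ∀ S, xs x S ≤ (rnk Indep S : ℝ)) :
    2 * (((fracs x).filter (InT Indep x)).image (blockF Indep x)).card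
      ≤ ((fracs x).filter (InT Indep x)).card := by
  classical
  set F := fracs x
  set FP := F.filter (InT Indep x) with hFP
  set BP := FP.image (blockF Indep x) with hBP
  have hmemT : ∀ w ∈ FP, InT Indep x w := by
    intro w hw; rw [hFP, Finset.mem_filter] at hw; exact hw.2
  have hdisj : ∀ B ∈ BP, ∀ C ∈ BP, B ≠ C → Disjoint (B ∩ F) (C ∩ F) := by
    intro B hB C hC hBC
    rw [hBP, Finset.mem_image] at hB hC
    obtain ⟨b, hb, rfl⟩ := hB
    obtain ⟨c, hc, rfl⟩ := hC
    rw [Finset.disjoint_left]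
    intro u hu1 hu2
    rw [Finset.mem_inter] at hu1 hu2
    exact hBC (block_overlap hM hf (hmemT b hb) (hmemT c hc) hu1.1 hu2.1)
  have hsubFP : BP.biUnion (fun B => B ∩ F) ⊆ FP := by
    intro u hu
    rw [Finset.mem_biUnion] at hu
    obtain ⟨B, hB, huB⟩ := hu
    rw [hBP, Finset.mem_image] at hB
    obtain ⟨b, hb, rfl⟩ := hB
    rw [Finset.mem_inter] at huB
    have huT : InT Indep x u :=
      InT_of_mem_Sv hM hf (hmemT b hb) (block_subset_Sv huB.1)
    rw [hFP, Finset.mem_filter]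
    exact ⟨huB.2, huT⟩
  have hcardsum : ∑ B ∈ BP, (B ∩ F).card = (BP.biUnion (fun B => B ∩ F)).card :=
    (Finset.card_biUnion hdisj).symm
  have h2 : ∀ B ∈ BP, 2 ≤ (B ∩ F).card := by
    intro B hB
    rw [hBP, Finset.mem_image] at hB
    obtain ⟨b, hb, rfl⟩ := hB
    have hbF : b ∈ F := by rw [hFP, Finset.mem_filter] at hb; exact hb.1
    exact block_two_fracs hM hx0 hx1 hf hbF (hmemT b hb)
  calc 2 * BP.card = ∑ _B ∈ BP, 2 := by rw [Finset.sum_const, smul_eq_mul, mul_comm]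
    _ ≤ ∑ B ∈ BP, (B ∩ F).card := Finset.sum_le_sum h2
    _ = (BP.biUnion (fun B => B ∩ F)).card := hcardsum
    _ ≤ FP.card := Finset.card_le_card hsubFP

end Direction
section Kernel

variable {x : V → ℝ}

/-- The functional `d ↦ ∑_{v ∈ B ∩ F} d v` on functions supported on fractional coords. -/
noncomputable def funcSum (x : V → ℝ) (B : Finset V) : ((↥(fracs x) → ℝ)) →ₗ[ℝ] ℝ :=
  ∑ v ∈ (fracs x).attach, if ((v : V) ∈ B) then (LinearMap.proj v) else 0

lemma funcSum_apply (B : Finset V) (d : ↥(fracs x) → ℝ) :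
    funcSum x B d = ∑ v ∈ (fracs x).attach, (if ((v : V) ∈ B) then d v else 0) := by
  classical
  rw [funcSum, LinearMap.coe_sum, Finset.sum_apply]
  refine Finset.sum_congr rfl (fun v _ => ?_)
  by_cases h : (v : V) ∈ B <;> simp [h]

lemma kernel_nonzero {ι κ : Type*} [Fintype ι] [Fintype κ]
    (Φ : (ι → ℝ) →ₗ[ℝ] (κ → ℝ)) (h : Fintype.card κ < Fintype.card ι) :
    ∃ d : ι → ℝ, d ≠ 0 ∧ Φ d = 0 := by
  by_contra hcon
  push_neg at hcon
  have hker : ∀ d, Φ d = 0 → d = 0 := by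
    intro d hd
    by_contra hne
    exact (hcon d hne) hd
  have hinj : Function.Injective Φ := by
    rw [← LinearMap.ker_eq_bot, Submodule.eq_bot_iff]
    intro d hd
    exact hker d hd
  have := LinearMap.finrank_le_finrank_of_injective hinj
  rw [Module.finrank_fintype_fun_eq_card, Module.finrank_fintype_fun_eq_card] at this
  omega

end Kernel

section ExistsDirection

variable {P Q : Finset V → Prop} {x : V → ℝ}

lemma exists_direction (hP : IsMatroid P) (hQ : IsMatroid Q)
    (hx0 : ∀ v, 0 ≤ x v) (hx1 : ∀ v, x v ≤ 1)
    (hfP : ∀ S, xs x S ≤ (rnk P S : ℝ)) (hfQ : ∀ S, xs x S ≤ (rnk Q S : ℝ))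
    (hF : (fracs x).Nonempty) :
    ∃ D : V → ℝ, D ≠ 0 ∧ (∀ v, v ∉ fracs x → D v = 0) ∧
      (∀ S, IsTight P x S → ∑ v ∈ S, D v = 0) ∧
      (∀ S, IsTight Q x S → ∑ v ∈ S, D v = 0) := by
  classical
  set F := fracs x with hFdef
  set FP := F.filter (InT P x) with hFP
  set BP := FP.image (blockF P x) with hBPdef
  set FQ := F.filter (InT Q x) with hFQ
  set BQ := FQ.image (blockF Q x) with hBQdef
  have hcountP : 2 * BP.card ≤ FP.card := blocks_count hP hx0 hx1 hfP
  have hcountQ : 2 * BQ.card ≤ FQ.card := blocks_count hQ hx0 hx1 hfQ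
  have hFPsub : FP ⊆ F := Finset.filter_subset _ _
  have hFQsub : FQ ⊆ F := Finset.filter_subset _ _
  -- obtain a nonzero d on fracs annihilated by all block functionals
  have main : ∃ d : (↥F → ℝ), d ≠ 0 ∧ (∀ B ∈ BP, funcSum x B d = 0) ∧
      (∀ B ∈ BQ, funcSum x B d = 0) := by
    by_cases hcase : FP = F ∧ FQ = F
    · -- case 2 : both cover F; use the linear relation to drop one functional
      obtain ⟨v₀, hv₀⟩ := hF
      have hv₀Q : InT Q x v₀ := by
        have : v₀ ∈ FQ := by rw [hcase.2]; exact hv₀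
        rw [hFQ, Finset.mem_filter] at this; exact this.2
      set B₀ := blockF Q x v₀ with hB₀def
      have hB₀ : B₀ ∈ BQ := by
        rw [hBQdef]
        exact Finset.mem_image_of_mem _ (by rw [hcase.2]; exact hv₀)
      have hcard : Fintype.card (↥BP ⊕ ↥(BQ.erase B₀)) < Fintype.card ↥F := by
        rw [Fintype.card_sum, Fintype.card_coe, Fintype.card_coe, Fintype.card_coe]
        have h1 : (BQ.erase B₀).card = BQ.card - 1 := Finset.card_erase_of_mem hB₀
        have h2 : 1 ≤ BQ.card := Finset.card_pos.mpr ⟨B₀, hB₀⟩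
        have e1 : FP.card = F.card := by rw [hcase.1]
        have e2 : FQ.card = F.card := by rw [hcase.2]
        have hFne : 1 ≤ F.card := Finset.card_pos.mpr ⟨v₀, hv₀⟩
        omega
      obtain ⟨d, hd0, hdker⟩ := kernel_nonzero
        (LinearMap.pi (fun k : (↥BP ⊕ ↥(BQ.erase B₀)) =>
          Sum.elim (fun B : ↥BP => funcSum x (B : Finset V))
                   (fun B : ↥(BQ.erase B₀) => funcSum x (B : Finset V)) k)) hcard
      have hPzero : ∀ B ∈ BP, funcSum x B d = 0 := by
        intro B hB
        have := congrFun hdker (Sum.inl ⟨B, hB⟩)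
        simpa [LinearMap.pi_apply] using this
      have hQzero' : ∀ B ∈ BQ.erase B₀, funcSum x B d = 0 := by
        intro B hB
        have := congrFun hdker (Sum.inr ⟨B, hB⟩)
        simpa [LinearMap.pi_apply] using this
      -- the sum of all P-block functionals equals ∑ d = sum of all Q-block functionals
      have huniq : ∀ (R : Finset V → Prop) (hR : IsMatroid R)
          (hfR : ∀ S, xs x S ≤ (rnk R S : ℝ)) (hcov : F.filter (InT R x) = F)
          (v : ↥F),
          ∑ B ∈ (F.filter (InT R x)).image (blockF R x),
            (if ((v:V) ∈ B) then d v else 0) = d v := by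
        intro R hR hfR hcov v
        have hvT : InT R x (v : V) := by
          have : (v : V) ∈ F.filter (InT R x) := by rw [hcov]; exact v.2
          rw [Finset.mem_filter] at this; exact this.2
        have hBv : blockF R x (v : V) ∈ (F.filter (InT R x)).image (blockF R x) :=
          Finset.mem_image_of_mem _ (by rw [hcov]; exact v.2)
        rw [Finset.sum_eq_single (blockF R x (v : V))]
        · rw [if_pos (mem_block_self hR hfR hvT)]
        · intro B hB hBne
          rw [Finset.mem_image] at hB
          obtain ⟨w, hw, rfl⟩ := hB
          have hwT : InT R x w := by
            rw [Finset.mem_filter] at hw; exact hw.2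
          rw [if_neg]
          intro hvB
          exact hBne ((block_eq_of_mem hR hfR hwT hvB).symm)
        · intro hBv'
          exact absurd hBv hBv'
      have hsumP : ∑ B ∈ BP, funcSum x B d = ∑ v ∈ F.attach, d v := by
        rw [Finset.sum_congr rfl (fun B _ => funcSum_apply B d), Finset.sum_comm]
        refine Finset.sum_congr rfl (fun v _ => ?_)
        exact huniq P hP hfP hcase.1 v
      have hsumQ : ∑ B ∈ BQ, funcSum x B d = ∑ v ∈ F.attach, d v := by
        rw [Finset.sum_congr rfl (fun B _ => funcSum_apply B d), Finset.sum_comm]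
        refine Finset.sum_congr rfl (fun v _ => ?_)
        exact huniq Q hQ hfQ hcase.2 v
      have hFzero : ∑ v ∈ F.attach, d v = 0 := by
        rw [← hsumP]
        exact Finset.sum_eq_zero hPzero
      have hB₀zero : funcSum x B₀ d = 0 := by
        have hsplit : funcSum x B₀ d + ∑ B ∈ BQ.erase B₀, funcSum x B d
            = ∑ B ∈ BQ, funcSum x B d :=
          Finset.add_sum_erase BQ (fun B => funcSum x B d) hB₀
        rw [Finset.sum_eq_zero hQzero', hsumQ, hFzero, add_zero] at hsplit
        exact hsplit
      refine ⟨d, hd0, hPzero, ?_⟩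
      intro B hB
      rcases eq_or_ne B B₀ with rfl | hne
      · exact hB₀zero
      · exact hQzero' B (Finset.mem_erase.mpr ⟨hne, hB⟩)
    · -- case 1 : some fractional coordinate is in no tight set on one side
      have hcard : Fintype.card (↥BP ⊕ ↥BQ) < Fintype.card ↥F := by
        rw [Fintype.card_sum, Fintype.card_coe, Fintype.card_coe, Fintype.card_coe]
        have h1 : FP.card ≤ F.card := Finset.card_le_card hFPsub
        have h2 : FQ.card ≤ F.card := Finset.card_le_card hFQsub
        have h3 : FP.card < F.card ∨ FQ.card < F.card := by
          rcases not_and_or.mp hcase with h | h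
          · exact Or.inl (Finset.card_lt_card (Finset.ssubset_iff_subset_ne.mpr ⟨hFPsub, h⟩))
          · exact Or.inr (Finset.card_lt_card (Finset.ssubset_iff_subset_ne.mpr ⟨hFQsub, h⟩))
        omega
      obtain ⟨d, hd0, hdker⟩ := kernel_nonzero
        (LinearMap.pi (fun k : (↥BP ⊕ ↥BQ) =>
          Sum.elim (fun B : ↥BP => funcSum x (B : Finset V))
                   (fun B : ↥BQ => funcSum x (B : Finset V)) k)) hcard
      refine ⟨d, hd0, ?_, ?_⟩
      · intro B hB
        have := congrFun hdker (Sum.inl ⟨B, hB⟩)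
        simpa [LinearMap.pi_apply] using this
      · intro B hB
        have := congrFun hdker (Sum.inr ⟨B, hB⟩)
        simpa [LinearMap.pi_apply] using this
  obtain ⟨d, hd0, hPzero, hQzero⟩ := main
  -- extend d by zero
  set D : V → ℝ := fun v => if h : v ∈ F then d ⟨v, h⟩ else 0 with hDdef
  have hDF : ∀ (v : ↥F), D (v : V) = d v := by
    intro v
    rw [hDdef]
    simp [v.2]
  have hsumD : ∀ B : Finset V, ∑ v ∈ B, D v = funcSum x B d := by
    intro B
    rw [funcSum_apply]
    have h1 : ∑ v ∈ B, D v = ∑ v ∈ B ∩ F, D v := by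
      rw [← Finset.sum_inter_add_sum_sdiff B F D]
      have : ∑ v ∈ B \ F, D v = 0 := by
        refine Finset.sum_eq_zero (fun v hv => ?_)
        rw [hDdef]
        exact dif_neg (Finset.mem_sdiff.mp hv).2
      rw [this, add_zero]
    have h2 : ∑ v ∈ B ∩ F, D v = ∑ v ∈ F, (if v ∈ B then D v else 0) := by
      rw [Finset.inter_comm, ← Finset.filter_mem_eq_inter, Finset.sum_filter]
    have h3 : ∑ v ∈ F, (if v ∈ B then D v else 0)
        = ∑ v ∈ F.attach, (if (v : V) ∈ B then D (v : V) else 0) :=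
      (Finset.sum_attach F _).symm
    rw [h1, h2, h3]
    exact Finset.sum_congr rfl (fun v _ => by rw [hDF])
  have htight : ∀ (R : Finset V → Prop), IsMatroid R →
      (∀ S, xs x S ≤ (rnk R S : ℝ)) →
      (∀ B ∈ (F.filter (InT R x)).image (blockF R x), funcSum x B d = 0) →
      ∀ S, IsTight R x S → ∑ v ∈ S, D v = 0 := by
    intro R hR hfR hzero S hS
    rw [sum_tight_blocks hR hfR hS D]
    refine Finset.sum_eq_zero (fun B hB => ?_)
    rw [Finset.mem_image] at hB
    obtain ⟨w, hw, rfl⟩ := hB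
    have hwT : InT R x w := ⟨S, hS, hw⟩
    by_cases hBF : ((blockF R x w) ∩ F).Nonempty
    · obtain ⟨u, hu⟩ := hBF
      rw [Finset.mem_inter] at hu
      have huT : InT R x u := InT_of_mem_Sv hR hfR hwT (block_subset_Sv hu.1)
      have hBu : blockF R x u = blockF R x w := block_eq_of_mem hR hfR hwT hu.1
      have hmem : blockF R x w ∈ (F.filter (InT R x)).image (blockF R x) := by
        rw [← hBu]
        exact Finset.mem_image_of_mem _ (Finset.mem_filter.mpr ⟨hu.2, huT⟩)
      rw [hsumD]
      exact hzero _ hmem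
    · refine Finset.sum_eq_zero (fun v hv => ?_)
      rw [hDdef]
      refine dif_neg (fun hvF => ?_)
      exact hBF ⟨v, Finset.mem_inter.mpr ⟨hv, hvF⟩⟩
  refine ⟨D, ?_, ?_, ?_, ?_⟩
  · intro hD
    apply hd0
    funext v
    have := congrFun hD (v : V)
    rw [hDF] at this
    exact this
  · intro v hv
    rw [hDdef]
    exact dif_neg hv
  · exact htight P hP hfP hPzero
  · exact htight Q hQ hfQ hQzero

end ExistsDirection
section Extreme

variable {P Q : Finset V → Prop}

/-- The fractional common independent set polytope. -/
def Kset (P Q : Finset V → Prop) : Set (V → ℝ) :=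
  {x | (∀ v, 0 ≤ x v) ∧ ∀ S : Finset V, xs x S ≤ (rnk P S : ℝ) ∧ xs x S ≤ (rnk Q S : ℝ)}

lemma Kset_le_one {x : V → ℝ} (hx : x ∈ Kset P Q) (v : V) : x v ≤ 1 := by
  have h := (hx.2 {v}).1
  have h2 : rnk P {v} ≤ 1 := by
    simpa using (rnk_le_card (Indep := P) (S := {v}))
  have h3 : (rnk P {v} : ℝ) ≤ 1 := by exact_mod_cast h2
  have h4 : xs x {v} = x v := by simp [xs]
  linarith [h, h3, h4.symm.le]

lemma perturb_in_K {x D : V → ℝ} (hx : x ∈ Kset P Q)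
    (hsupp : ∀ v, v ∉ fracs x → D v = 0)
    (htP : ∀ S, IsTight P x S → ∑ v ∈ S, D v = 0)
    (htQ : ∀ S, IsTight Q x S → ∑ v ∈ S, D v = 0) :
    ∃ ε : ℝ, 0 < ε ∧ x + ε • D ∈ Kset P Q ∧ x - ε • D ∈ Kset P Q := by
  classical
  set M : ℝ := (∑ v : V, |D v|) + 1 with hM
  have hMpos : 0 < M := by
    have : (0:ℝ) ≤ ∑ v : V, |D v| := Finset.sum_nonneg (fun v _ => abs_nonneg _)
    rw [hM]; linarith
  have hbound : ∀ S : Finset V, |∑ v ∈ S, D v| ≤ M := by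
    intro S
    calc |∑ v ∈ S, D v| ≤ ∑ v ∈ S, |D v| := Finset.abs_sum_le_sum_abs _ _
      _ ≤ ∑ v : V, |D v| := Finset.sum_le_sum_of_subset_of_nonneg
          (Finset.subset_univ S) (fun v _ _ => abs_nonneg _)
      _ ≤ M := by rw [hM]; linarith
  have hbv : ∀ v : V, |D v| ≤ M := by
    intro v
    have := hbound {v}
    simpa using this
  -- slack minima
  set AP := Finset.univ.powerset.filter (fun S => ¬ IsTight P x S) with hAP
  set AQ := Finset.univ.powerset.filter (fun S => ¬ IsTight Q x S) with hAQ
  set sP : ℝ := if h : AP.Nonempty then AP.inf' h (fun S => (rnk P S : ℝ) - xs x S) else 1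
    with hsP
  set sQ : ℝ := if h : AQ.Nonempty then AQ.inf' h (fun S => (rnk Q S : ℝ) - xs x S) else 1
    with hsQ
  set sc : ℝ := if h : (fracs x).Nonempty then (fracs x).inf' h x else 1 with hsc
  have hsPpos : 0 < sP := by
    rw [hsP]
    split
    · rename_i h
      rw [Finset.lt_inf'_iff]
      intro S hS
      rw [hAP, Finset.mem_filter] at hS
      have hle := (hx.2 S).1
      have hne : xs x S ≠ (rnk P S : ℝ) := hS.2
      have : xs x S < (rnk P S : ℝ) := lt_of_le_of_ne hle hne
      linarith
    · norm_num
  have hsQpos : 0 < sQ := by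
    rw [hsQ]
    split
    · rename_i h
      rw [Finset.lt_inf'_iff]
      intro S hS
      rw [hAQ, Finset.mem_filter] at hS
      have hle := (hx.2 S).2
      have : xs x S < (rnk Q S : ℝ) := lt_of_le_of_ne hle hS.2
      linarith
    · norm_num
  have hscpos : 0 < sc := by
    rw [hsc]
    split
    · rename_i h
      rw [Finset.lt_inf'_iff]
      intro v hv
      rw [fracs, Finset.mem_filter] at hv
      exact lt_of_le_of_ne (hx.1 v) (Ne.symm hv.2.1)
    · norm_num
  set ε : ℝ := (min (min sP sQ) sc) / M with hε
  have hεpos : 0 < ε := by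
    rw [hε]
    apply div_pos _ hMpos
    exact lt_min (lt_min hsPpos hsQpos) hscpos
  have hεM : ε * M = min (min sP sQ) sc := by
    rw [hε]; field_simp
  have hεM_le_sP : ε * M ≤ sP := by rw [hεM]; exact (min_le_left _ _).trans (min_le_left _ _)
  have hεM_le_sQ : ε * M ≤ sQ := by rw [hεM]; exact (min_le_left _ _).trans (min_le_right _ _)
  have hεM_le_sc : ε * M ≤ sc := by rw [hεM]; exact min_le_right _ _
  -- sums after perturbation
  have hxs_add : ∀ (c : ℝ) (S : Finset V), xs (x + c • D) S = xs x S + c * ∑ v ∈ S, D v := by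
    intro c S
    rw [xs, xs, Finset.mul_sum, ← Finset.sum_add_distrib]
    exact Finset.sum_congr rfl (fun v _ => by simp [mul_comm])
  have key : ∀ (c : ℝ), |c| ≤ ε → x + c • D ∈ Kset P Q := by
    intro c hc
    have hcM : ∀ S : Finset V, |c * ∑ v ∈ S, D v| ≤ ε * M := by
      intro S
      rw [abs_mul]
      apply mul_le_mul hc (hbound S) (abs_nonneg _) (le_of_lt hεpos)
    constructor
    · intro v
      rcases eq_or_ne (D v) 0 with h0 | h0
      · simp [h0, hx.1 v]
      · have hvF : v ∈ fracs x := by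
          by_contra hvF
          exact h0 (hsupp v hvF)
        have hxv : sc ≤ x v := by
          rw [hsc]
          rw [dif_pos ⟨v, hvF⟩]
          exact Finset.inf'_le _ hvF
        have : |c * D v| ≤ ε * M := by
          rw [abs_mul]
          exact mul_le_mul hc (hbv v) (abs_nonneg _) (le_of_lt hεpos)
        have h2 : |c * D v| ≤ x v := le_trans this (le_trans hεM_le_sc hxv)
        have h3 := neg_abs_le (c * D v)
        simp only [Pi.add_apply, Pi.smul_apply, smul_eq_mul]
        linarith
    · intro S
      constructor
      · rw [hxs_add]
        by_cases ht : IsTight P x S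
        · rw [htP S ht, mul_zero, add_zero, ht]
        · have hSA : S ∈ AP := by
            rw [hAP, Finset.mem_filter]
            exact ⟨Finset.mem_powerset.mpr (Finset.subset_univ S), ht⟩
          have hslack : sP ≤ (rnk P S : ℝ) - xs x S := by
            rw [hsP, dif_pos ⟨S, hSA⟩]
            exact Finset.inf'_le _ hSA
          have := hcM S
          have habs := le_abs_self (c * ∑ v ∈ S, D v)
          linarith
      · rw [hxs_add]
        by_cases ht : IsTight Q x S
        · rw [htQ S ht, mul_zero, add_zero, ht]
        · have hSA : S ∈ AQ := by
            rw [hAQ, Finset.mem_filter]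
            exact ⟨Finset.mem_powerset.mpr (Finset.subset_univ S), ht⟩
          have hslack : sQ ≤ (rnk Q S : ℝ) - xs x S := by
            rw [hsQ, dif_pos ⟨S, hSA⟩]
            exact Finset.inf'_le _ hSA
          have := hcM S
          have habs := le_abs_self (c * ∑ v ∈ S, D v)
          linarith
  refine ⟨ε, hεpos, key ε (by rw [abs_of_pos hεpos]), ?_⟩
  have := key (-ε) (by rw [abs_neg, abs_of_pos hεpos])
  convert this using 1
  funext v
  simp only [Pi.sub_apply, Pi.add_apply, Pi.smul_apply, smul_eq_mul]
  ring

lemma extremePoint_indicator (hP : IsMatroid P) (hQ : IsMatroid Q)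
    {x : V → ℝ} (hext : x ∈ Set.extremePoints ℝ (Kset P Q)) :
    ∃ e : Finset V, P e ∧ Q e ∧ x = (fun v => if v ∈ e then (1:ℝ) else 0) := by
  classical
  obtain ⟨hxK, hxe⟩ := hext
  have hint : ∀ v, x v = 0 ∨ x v = 1 := by
    by_contra hcon
    push_neg at hcon
    obtain ⟨v, hv0, hv1⟩ := hcon
    have hFne : (fracs x).Nonempty :=
      ⟨v, by rw [fracs, Finset.mem_filter]; exact ⟨Finset.mem_univ v, hv0, hv1⟩⟩
    obtain ⟨D, hD0, hsupp, htP, htQ⟩ := exists_direction hP hQ hxK.1 (Kset_le_one hxK)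
      (fun S => (hxK.2 S).1) (fun S => (hxK.2 S).2) hFne
    obtain ⟨ε, hεpos, hyK, hzK⟩ := perturb_in_K hxK hsupp htP htQ
    have hseg : x ∈ openSegment ℝ (x + ε • D) (x - ε • D) := by
      refine ⟨1/2, 1/2, by norm_num, by norm_num, by norm_num, ?_⟩
      funext w
      simp only [Pi.add_apply, Pi.sub_apply, Pi.smul_apply, smul_eq_mul]
      ring
    have := hxe hyK hzK hseg
    apply hD0
    funext w
    have h2 : x w + ε * D w = x w := by
      have := congrFun this w
      simpa using this
    have : ε * D w = 0 := by linarith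
    rcases mul_eq_zero.mp this with h | h
    · exact absurd h (ne_of_gt hεpos)
    · exact h
  set e := Finset.univ.filter (fun v => x v = 1) with he
  have hxind : x = (fun v => if v ∈ e then (1:ℝ) else 0) := by
    funext v
    by_cases h : x v = 1
    · simp [he, Finset.mem_filter, h]
    · have h0 : x v = 0 := (hint v).resolve_right h
      simp [he, Finset.mem_filter, h0, h]
  have h1 : xs x e = (e.card : ℝ) := by
    have hall : ∀ v ∈ e, x v = 1 := by
      intro v hv
      rw [he, Finset.mem_filter] at hv
      exact hv.2
    rw [xs, Finset.sum_congr rfl hall, Finset.sum_const, nsmul_eq_mul, mul_one]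
  have hcardP : rnk P e = e.card := by
    have hle : (e.card : ℝ) ≤ (rnk P e : ℝ) := by rw [← h1]; exact (hxK.2 e).1
    have hge := rnk_le_card (Indep := P) (S := e)
    have h2 : e.card ≤ rnk P e := by exact_mod_cast hle
    omega
  have hcardQ : rnk Q e = e.card := by
    have hle : (e.card : ℝ) ≤ (rnk Q e : ℝ) := by rw [← h1]; exact (hxK.2 e).2
    have hge := rnk_le_card (Indep := Q) (S := e)
    have h2 : e.card ≤ rnk Q e := by exact_mod_cast hle
    omega
  exact ⟨e, indep_of_rnk_eq_card hP hcardP, indep_of_rnk_eq_card hQ hcardQ, hxind⟩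

end Extreme
section Assembly

variable {P Q : Finset V → Prop}

/-- Indicator vectors of common independent sets. -/
def Xind (P Q : Finset V → Prop) : Set (V → ℝ) :=
  {y | ∃ e : Finset V, (P e ∧ Q e) ∧ y = fun v => if v ∈ e then (1:ℝ) else 0}

lemma Kset_convex : Convex ℝ (Kset P Q) := by
  intro x hx y hy a b ha hb hab
  constructor
  · intro v
    have := hx.1 v
    have := hy.1 v
    simp only [Pi.add_apply, Pi.smul_apply, smul_eq_mul]
    nlinarith
  · intro S
    have hxsum : xs (a • x + b • y) S = a * xs x S + b * xs y S := by
      rw [xs, xs, xs, Finset.mul_sum, Finset.mul_sum, ← Finset.sum_add_distrib]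
      exact Finset.sum_congr rfl (fun v _ => by simp [mul_comm])
    constructor
    · rw [hxsum]
      have h1 := (hx.2 S).1
      have h2 := (hy.2 S).1
      nlinarith
    · rw [hxsum]
      have h1 := (hx.2 S).2
      have h2 := (hy.2 S).2
      nlinarith

lemma Kset_isClosed : IsClosed (Kset P Q) := by
  have h1 : Kset P Q = (⋂ v : V, {x : V → ℝ | 0 ≤ x v}) ∩
      ⋂ S : Finset V, ({x : V → ℝ | xs x S ≤ (rnk P S : ℝ)} ∩
        {x : V → ℝ | xs x S ≤ (rnk Q S : ℝ)}) := by
    ext x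
    simp only [Kset, Set.mem_inter_iff, Set.mem_iInter, Set.mem_setOf_eq]
    try tauto
  rw [h1]
  have hxs : ∀ S : Finset V, Continuous (fun x : V → ℝ => xs x S) := by
    intro S
    exact continuous_finset_sum S (fun v _ => continuous_apply v)
  refine IsClosed.inter (isClosed_iInter (fun v => ?_)) (isClosed_iInter (fun S => ?_))
  · exact isClosed_le continuous_const (continuous_apply v)
  · exact IsClosed.inter (isClosed_le (hxs S) continuous_const)
      (isClosed_le (hxs S) continuous_const)

lemma Kset_isCompact : IsCompact (Kset P Q) := by
  have hsub : Kset P Q ⊆ Set.pi Set.univ (fun _ : V => Set.Icc (0:ℝ) 1) := by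
    intro x hx
    rw [Set.mem_pi]
    intro v _
    exact ⟨hx.1 v, Kset_le_one hx v⟩
  exact IsCompact.of_isClosed_subset
    (isCompact_univ_pi (fun _ => isCompact_Icc)) Kset_isClosed hsub

lemma approx_combination (hP : IsMatroid P) (hQ : IsMatroid Q)
    {x₀ : V → ℝ} (hx₀ : x₀ ∈ Kset P Q) {ε : ℝ} (hε : 0 < ε) :
    ∃ z ∈ convexHull ℝ (Xind P Q), dist x₀ z < ε := by
  have hKM := closure_convexHull_extremePoints Kset_isCompact (Kset_convex (P := P) (Q := Q))
  have hsub : Set.extremePoints ℝ (Kset P Q) ⊆ Xind P Q := by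
    intro y hy
    obtain ⟨e, hPe, hQe, hye⟩ := extremePoint_indicator hP hQ hy
    exact ⟨e, ⟨hPe, hQe⟩, hye⟩
  have hx₀cl : x₀ ∈ closure (convexHull ℝ (Xind P Q)) := by
    have h1 : x₀ ∈ closure (convexHull ℝ (Set.extremePoints ℝ (Kset P Q))) := by
      rw [hKM]; exact hx₀
    exact closure_mono (convexHull_mono hsub) h1
  rw [Metric.mem_closure_iff] at hx₀cl
  exact hx₀cl ε hε

end Assembly
section Final

variable {P Q : Finset V → Prop}

lemma exists_cover_le {z : V → ℝ} (hz : z ∈ convexHull ℝ (Xind P Q))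
    {c : ℝ} (hc : 0 < c) (hcov : ∀ v, 1 ≤ c * z v) :
    ∃ f : Finset V → ℝ, (∀ e, 0 ≤ f e) ∧ (∀ e, f e ≠ 0 → P e ∧ Q e) ∧
      (∀ v : V, 1 ≤ ∑ e : Finset V, if v ∈ e then f e else 0) ∧
      (∑ e : Finset V, f e) = c := by
  classical
  rw [_root_.convexHull_eq] at hz
  obtain ⟨ι, t, w, zf, hw0, hw1, hzX, hcm⟩ := hz
  have hzsum : z = ∑ i ∈ t, w i • zf i := by
    rw [← hcm, Finset.centerMass_eq_of_sum_1 _ _ hw1]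
  set π : ι → Finset V := fun i => Finset.univ.filter (fun v => zf i v = 1) with hπdef
  have hπ : ∀ i ∈ t, (P (π i) ∧ Q (π i)) ∧
      zf i = (fun v => if v ∈ π i then (1:ℝ) else 0) := by
    intro i hi
    obtain ⟨e, hePQ, hze⟩ := hzX i hi
    have hπe : π i = e := by
      rw [hπdef]
      ext v
      rw [Finset.mem_filter]
      constructor
      · rintro ⟨-, h1⟩
        by_contra hve
        rw [hze] at h1
        simp [hve] at h1
      · intro hve
        refine ⟨Finset.mem_univ v, ?_⟩
        rw [hze]
        simp [hve]
    rw [hπe]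
    exact ⟨hePQ, hze⟩
  set g : Finset V → ℝ := fun e => ∑ i ∈ t.filter (fun i => π i = e), w i with hgdef
  have hg0 : ∀ e, 0 ≤ g e := by
    intro e
    refine Finset.sum_nonneg (fun i hi => hw0 i (Finset.mem_filter.mp hi).1)
  have hgsum : ∑ e : Finset V, g e = 1 := by
    rw [hgdef]
    rw [Finset.sum_fiberwise_of_maps_to (fun i _ => Finset.mem_univ (π i)) w]
    exact hw1
  have hgcov : ∀ v : V, (∑ e : Finset V, if v ∈ e then g e else 0) = z v := by
    intro v
    have h1 : ∀ e : Finset V, (if v ∈ e then g e else 0)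
        = ∑ i ∈ t.filter (fun i => π i = e), (if v ∈ π i then w i else 0) := by
      intro e
      rw [hgdef]
      by_cases hve : v ∈ e
      · rw [if_pos hve]
        refine Finset.sum_congr rfl (fun i hi => ?_)
        rw [(Finset.mem_filter.mp hi).2, if_pos hve]
      · rw [if_neg hve]
        refine (Finset.sum_eq_zero (fun i hi => ?_)).symm
        rw [(Finset.mem_filter.mp hi).2, if_neg hve]
    rw [Finset.sum_congr rfl (fun e _ => h1 e)]
    rw [Finset.sum_fiberwise_of_maps_to (fun i _ => Finset.mem_univ (π i))]
    have h2 : z v = ∑ i ∈ t, w i * zf i v := by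
      rw [hzsum, Finset.sum_apply]
      exact Finset.sum_congr rfl (fun i _ => by simp)
    rw [h2]
    refine Finset.sum_congr rfl (fun i hi => ?_)
    rw [((hπ i hi).2)]
    by_cases hv : v ∈ π i <;> simp [hv]
  refine ⟨fun e => c * g e, ?_, ?_, ?_, ?_⟩
  · intro e
    exact mul_nonneg (le_of_lt hc) (hg0 e)
  · intro e he
    have hne : g e ≠ 0 := by
      intro h0
      exact he (by show c * g e = 0; rw [h0, mul_zero])
    obtain ⟨i, hi, hwi⟩ := Finset.exists_ne_zero_of_sum_ne_zero hne
    rw [Finset.mem_filter] at hi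
    rw [← hi.2]
    exact (hπ i hi.1).1
  · intro v
    have : (∑ e : Finset V, if v ∈ e then c * g e else 0)
        = c * ∑ e : Finset V, (if v ∈ e then g e else 0) := by
      rw [Finset.mul_sum]
      refine Finset.sum_congr rfl (fun e _ => ?_)
      by_cases hve : v ∈ e <;> simp [hve]
    rw [this, hgcov v]
    exact hcov v
  · rw [← Finset.mul_sum, hgsum, mul_one]

theorem stmt3' [Nonempty V] (hP : IsMatroid P) (hQ : IsMatroid Q)
    (hPl : Loopless P) (hQl : Loopless Q) :
    betaStar (fun e => P e ∧ Q e) = max (zeta P) (zeta Q) := by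
  classical
  set k := max (zeta P) (zeta Q) with hkdef
  have hk1 : 1 ≤ k := le_trans (one_le_zeta hPl) (le_max_left _ _)
  have hkpos : 0 < k := lt_of_lt_of_le one_pos hk1
  refine le_antisymm ?_ (lower_bound hP hQ hPl hQl)
  -- upper bound
  have hx₀K : (fun _ : V => k⁻¹) ∈ Kset P Q := by
    constructor
    · intro v
      positivity
    · intro S
      have hxsS : xs (fun _ : V => k⁻¹) S = (S.card : ℝ) * k⁻¹ := by
        rw [xs, Finset.sum_const, nsmul_eq_mul]
      constructor
      · rw [hxsS]
        have h1 : (S.card : ℝ) ≤ k * (rnk P S : ℝ) := by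
          refine le_trans (card_le_zeta_mul hPl S) ?_
          exact mul_le_mul_of_nonneg_right (le_max_left _ _) (Nat.cast_nonneg _)
        calc (S.card : ℝ) * k⁻¹ ≤ (k * (rnk P S : ℝ)) * k⁻¹ :=
            mul_le_mul_of_nonneg_right h1 (by positivity)
          _ = (rnk P S : ℝ) := by field_simp
      · rw [hxsS]
        have h1 : (S.card : ℝ) ≤ k * (rnk Q S : ℝ) := by
          refine le_trans (card_le_zeta_mul hQl S) ?_
          exact mul_le_mul_of_nonneg_right (le_max_right _ _) (Nat.cast_nonneg _)
        calc (S.card : ℝ) * k⁻¹ ≤ (k * (rnk Q S : ℝ)) * k⁻¹ :=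
            mul_le_mul_of_nonneg_right h1 (by positivity)
          _ = (rnk Q S : ℝ) := by field_simp
  apply le_of_forall_pos_le_add
  intro δ hδ
  set ε : ℝ := δ / (k * (k + δ)) with hεdef
  have hεpos : 0 < ε := by
    rw [hεdef]
    positivity
  have hinv : k⁻¹ - ε = (k + δ)⁻¹ := by
    rw [hεdef]
    field_simp
    try ring
  obtain ⟨z, hzmem, hdist⟩ := approx_combination hP hQ hx₀K hεpos
  have hzv : ∀ v, (k + δ)⁻¹ ≤ z v := by
    intro v
    have h1 : dist ((fun _ : V => k⁻¹) v) (z v) ≤ dist (fun _ : V => k⁻¹) z :=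
      dist_le_pi_dist (fun _ : V => k⁻¹) z v
    have h2 : |k⁻¹ - z v| < ε := by
      rw [← Real.dist_eq]
      exact lt_of_le_of_lt h1 hdist
    have h3 := abs_lt.mp h2
    linarith [hinv]
  have hcov : ∀ v, 1 ≤ (k + δ) * z v := by
    intro v
    have hkδ : 0 < k + δ := by linarith
    calc (1:ℝ) = (k + δ) * (k + δ)⁻¹ := by field_simp
      _ ≤ (k + δ) * z v := mul_le_mul_of_nonneg_left (hzv v) (le_of_lt hkδ)
  obtain ⟨f, hf0, hfD, hfcov, hfsum⟩ := exists_cover_le hzmem (by linarith : (0:ℝ) < k + δ) hcov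
  have hmem : (k + δ) ∈ {x : ℝ | ∃ f : Finset V → ℝ, (∀ e, 0 ≤ f e) ∧
      (∀ e, f e ≠ 0 → P e ∧ Q e) ∧
      (∀ v : V, 1 ≤ ∑ e : Finset V, if v ∈ e then f e else 0) ∧
      x = ∑ e : Finset V, f e} := ⟨f, hf0, hfD, hfcov, hfsum.symm⟩
  exact csInf_le coverSet_bddBelow hmem

end Final


/-- The fractional covering number of the intersection of two matroids equals
`max(ζ(P), ζ(Q))`. -/
theorem stmt3 [Nonempty V] (P Q : Finset V → Prop)
    (hP : IsMatroid P) (hQ : IsMatroid Q)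
    (hPl : Loopless P) (hQl : Loopless Q) :
    betaStar (fun e => P e ∧ Q e) = max (zeta P) (zeta Q) :=
  stmt3' hP hQ hPl hQl
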